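/- Counting upcrossing orderings: the number of increasing interleavings of u(k) upcrossings from level k−1 to k among and before u(k+1) upcrossings from level k to k+1, over levels k = ρn,…,n−1 with prescribed counts m_k, equals the product over k of binom(m_{k+1} + m_k − 1, m_k). -/

import Mathlib

noncomputable section


namespace UpX

/-- nearest-neighbour step relation -/
def step (a b : ℤ) : Prop := |b - a| = 1

/-- number of upcrossings of level `k` (pairs `(k-1, k)` of adjacent entries) -/
def ups (k : ℤ) : List ℤ → ℕ
  | a :: b :: t => (if a = k - 1 ∧ b = k then 1 else 0) + ups k (b :: t)
  | _ => 0

/-- number of downcrossings of level `k` -/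
def downs (k : ℤ) : List ℤ → ℕ
  | a :: b :: t => (if a = k ∧ b = k - 1 then 1 else 0) + downs k (b :: t)
  | _ => 0

@[simp] lemma ups_nil (k : ℤ) : ups k [] = 0 := rfl
@[simp] lemma ups_single (k a : ℤ) : ups k [a] = 0 := rfl
@[simp] lemma downs_nil (k : ℤ) : downs k [] = 0 := rfl
@[simp] lemma downs_single (k a : ℤ) : downs k [a] = 0 := rfl

lemma ups_cons_cons (k a b : ℤ) (t : List ℤ) :
    ups k (a :: b :: t) = (if a = k - 1 ∧ b = k then 1 else 0) + ups k (b :: t) := rfl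

lemma downs_cons_cons (k a b : ℤ) (t : List ℤ) :
    downs k (a :: b :: t) = (if a = k ∧ b = k - 1 then 1 else 0) + downs k (b :: t) := rfl

lemma ups_cons (k a : ℤ) (l : List ℤ) :
    ups k (a :: l) = (if a = k - 1 ∧ l.head? = some k then 1 else 0) + ups k l := by
  cases l with
  | nil => simp
  | cons b t => simp [ups_cons_cons]

lemma downs_cons (k a : ℤ) (l : List ℤ) :
    downs k (a :: l) = (if a = k ∧ l.head? = some (k - 1) then 1 else 0) + downs k l := by
  cases l with
  | nil => simp
  | cons b t => simp [downs_cons_cons]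

lemma ups_append (k : ℤ) (l₁ l₂ : List ℤ) :
    ups k (l₁ ++ l₂) = ups k l₁ + ups k l₂ +
      (if l₁.getLast? = some (k - 1) ∧ l₂.head? = some k then 1 else 0) := by
  induction l₁ with
  | nil => simp
  | cons a t ih =>
    rw [List.cons_append, ups_cons, ih, ups_cons]
    cases t <;> simp [List.head?_append, List.getLast?_cons_cons] <;> ring

lemma downs_append (k : ℤ) (l₁ l₂ : List ℤ) :
    downs k (l₁ ++ l₂) = downs k l₁ + downs k l₂ +
      (if l₁.getLast? = some k ∧ l₂.head? = some (k - 1) then 1 else 0) := by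
  induction l₁ with
  | nil => simp
  | cons a t ih =>
    rw [List.cons_append, downs_cons, ih, downs_cons]
    cases t <;> simp [List.head?_append, List.getLast?_cons_cons] <;> ring

end UpX

namespace UpX

lemma step_cases {a b : ℤ} (h : step a b) : b = a + 1 ∨ b = a - 1 := by
  rcases abs_eq (by norm_num : (0:ℤ) ≤ 1) |>.mp h with h' | h' <;> omega

/-- crossing parity: ups + [head ≥ k] = downs + [last ≥ k] -/
lemma ups_parity (k : ℤ) : ∀ l : List ℤ, l.Chain' step → ∀ a b : ℤ,
    l.head? = some a → l.getLast? = some b →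
    ups k l + (if k ≤ a then 1 else 0) = downs k l + (if k ≤ b then 1 else 0)
  | [], _, a, b, ha, _ => by simp at ha
  | [x], _, a, b, ha, hb => by
    simp at ha hb; subst ha; subst hb; rfl
  | x :: y :: t, hc, a, b, ha, hb => by
    simp at ha; subst ha
    have hstep : step x y := (List.isChain_cons_cons.mp hc).1
    have ih := ups_parity k (y :: t) (List.isChain_cons_cons.mp hc).2 y b rfl
      (by rwa [List.getLast?_cons_cons] at hb)
    rw [ups_cons_cons, downs_cons_cons]
    rcases step_cases hstep with h | h <;>
    · subst h
      split_ifs at ih ⊢ <;> omega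

/-- each step crosses exactly one level in `[r, n]` -/
lemma length_eq_sum_crossings (r n : ℤ) : ∀ l : List ℤ, l ≠ [] → l.Chain' step →
    (∀ x ∈ l, r - 1 ≤ x ∧ x ≤ n) →
    l.length = 1 + ∑ k ∈ Finset.Icc r n, (ups k l + downs k l)
  | [], h, _, _ => absurd rfl h
  | [x], _, _, _ => by simp
  | x :: y :: t, _, hc, hb => by
    have hstep : step x y := (List.isChain_cons_cons.mp hc).1
    have ih := length_eq_sum_crossings r n (y :: t) (by simp) (List.isChain_cons_cons.mp hc).2
      (fun z hz => hb z (List.mem_cons_of_mem _ hz))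
    have hx := hb x (by simp)
    have hy := hb y (by simp)
    have hone : ∀ k : ℤ, (if x = k - 1 ∧ y = k then 1 else 0) + (if x = k ∧ y = k - 1 then 1 else 0)
        = if k = max x y then 1 else 0 := by
      intro k
      rcases step_cases hstep with h | h <;> subst h <;> split_ifs <;> omega
    have hsum : ∑ k ∈ Finset.Icc r n, (ups k (x :: y :: t) + downs k (x :: y :: t)) =
        (∑ k ∈ Finset.Icc r n, (if k = max x y then 1 else 0)) +
        ∑ k ∈ Finset.Icc r n, (ups k (y :: t) + downs k (y :: t)) := by
      rw [← Finset.sum_add_distrib]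
      refine Finset.sum_congr rfl fun k _ => ?_
      rw [ups_cons_cons, downs_cons_cons, ← hone k]
      ring
    have hmem : max x y ∈ Finset.Icc r n := by
      simp only [Finset.mem_Icc]
      rcases step_cases hstep with h | h <;> subst h <;> simp [max_def] <;> omega
    rw [List.length_cons, ih, hsum, Finset.sum_ite_eq' (Finset.Icc r n) (max x y) (fun _ => 1),
      if_pos hmem]
    ring

end UpX

namespace UpX

/-- the set of admissible paths, as lists -/
def Good (r n : ℤ) (m : ℤ → ℕ) (l : List ℤ) : Prop :=
  l.head? = some (n - 1) ∧ l.getLast? = some n ∧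
  l.Chain' step ∧
  (∀ x ∈ l, r - 1 ≤ x ∧ x ≤ n) ∧
  (∀ k ∈ Finset.Icc r n, ups k l = m k)

lemma Good.ne_nil {r n m l} (h : Good r n m l) : l ≠ [] := by
  intro hl; subst hl; simpa using h.1

lemma Good.downs_eq {r n : ℤ} {m : ℤ → ℕ} {l : List ℤ} (h : Good r n m l)
    (k : ℤ) (hk : k ∈ Finset.Icc r n) :
    downs k l = m k - (if k = n then 1 else 0) ∧ (k = n → 1 ≤ m k) := by
  have hpar := ups_parity k l h.2.2.1 (n - 1) n h.1 h.2.1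
  rw [h.2.2.2.2 k hk] at hpar
  simp only [Finset.mem_Icc] at hk
  constructor
  · split_ifs at hpar ⊢ <;> omega
  · intro hkn; subst hkn; split_ifs at hpar <;> omega

/-- the length of a good path is twice the total number of upcrossings -/
lemma Good.length {r n : ℤ} {m : ℤ → ℕ} {l : List ℤ} (hrn : r ≤ n) (h : Good r n m l) :
    l.length = 2 * ∑ k ∈ Finset.Icc r n, m k := by
  have hlen := length_eq_sum_crossings r n l h.ne_nil h.2.2.1 h.2.2.2.1
  have hsum : ∑ k ∈ Finset.Icc r n, (ups k l + downs k l)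
      = (∑ k ∈ Finset.Icc r n, 2 * m k) - (∑ k ∈ Finset.Icc r n, if k = n then 1 else 0) := by
    rw [← Finset.sum_tsub_distrib]
    · refine Finset.sum_congr rfl fun k hk => ?_
      have hd := (h.downs_eq k hk).1
      have hu := h.2.2.2.2 k hk
      have := (h.downs_eq k hk).2
      split_ifs at hd ⊢ <;> omega
    · intro k hk
      have := (h.downs_eq k hk).2
      split_ifs <;> omega
  rw [Finset.sum_ite_eq' (Finset.Icc r n) n (fun _ => 1),
    if_pos (by simp [Finset.mem_Icc]; omega)] at hsum
  have hn1 : 1 ≤ m n := (h.downs_eq n (by simp [Finset.mem_Icc]; omega)).2 rfl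
  have hle : 1 ≤ ∑ k ∈ Finset.Icc r n, m k :=
    le_trans hn1 (Finset.single_le_sum (f := m) (fun _ _ => Nat.zero_le _)
      (by simp [Finset.mem_Icc]; omega))
  rw [hlen, hsum, ← Finset.mul_sum]
  omega

/-- if `k - 1` never occurs, there are no upcrossings of `k` -/
lemma ups_eq_zero {k : ℤ} : ∀ {l : List ℤ}, (∀ x ∈ l, x ≠ k - 1) → ups k l = 0
  | [], _ => rfl
  | [_], _ => rfl
  | a :: b :: t, h => by
    rw [ups_cons_cons, ups_eq_zero (fun x hx => h x (List.mem_cons_of_mem _ hx))]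
    simp only [add_zero, ite_eq_right_iff, and_imp]
    intro ha _; exact absurd ha (h a (by simp))

/-- occurrences of `r` in a path staying `≥ r` whose last entry is not `r`
are exactly the upcrossings of `r+1` -/
lemma count_eq_ups (r : ℤ) : ∀ l : List ℤ, l.Chain' step → (∀ x ∈ l, r ≤ x) →
    l.getLast? ≠ some r → l.count r = ups (r + 1) l
  | [], _, _, _ => rfl
  | [a], _, _, hl => by
    simp only [List.getLast?_singleton, ne_eq, Option.some.injEq] at hl
    simp [List.count_singleton, hl]
  | a :: b :: t, hc, hb, hl => by
    have hstep : step a b := (List.isChain_cons_cons.mp hc).1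
    have ih := count_eq_ups r (b :: t) (List.isChain_cons_cons.mp hc).2
      (fun x hx => hb x (List.mem_cons_of_mem _ hx))
      (by rwa [List.getLast?_cons_cons] at hl)
    rw [ups_cons_cons, List.count_cons, ih]
    have hbb := hb b (by simp)
    have haa := hb a (by simp)
    have : (if a = r + 1 - 1 ∧ b = r + 1 then 1 else 0) = if a = r then 1 else 0 := by
      rcases step_cases hstep with h | h <;> subst h <;> split_ifs <;> omega
    rw [this]
    simp only [beq_iff_eq]
    split_ifs <;> omega

end UpX

namespace UpX

lemma getLast?_cons_ne_nil {α : Type*} {a : α} {t : List α} (h : t ≠ []) :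
    (a :: t).getLast? = t.getLast? := by
  cases t with
  | nil => exact absurd rfl h
  | cons b t' => exact List.getLast?_cons_cons

/-- `c` "dips" from level `r` down to `r-1` and back -/
def dips (r : ℤ) : ℕ → List ℤ
  | 0 => []
  | c + 1 => (r - 1) :: r :: dips r c

/-- insert dips below level `r` at each visit of `t` to level `r`, according to `cs` -/
def expand (r : ℤ) : List ℤ → List ℕ → List ℤ
  | [], _ => []
  | a :: t, cs =>
    if a = r then (r :: dips r cs.headI) ++ expand r t cs.tail
    else a :: expand r t cs

@[simp] lemma dips_zero (r : ℤ) : dips r 0 = [] := rfl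
lemma dips_succ (r : ℤ) (c : ℕ) : dips r (c + 1) = (r - 1) :: r :: dips r c := rfl

@[simp] lemma expand_nil (r : ℤ) (cs : List ℕ) : expand r [] cs = [] := rfl
lemma expand_cons (r a : ℤ) (t : List ℤ) (cs : List ℕ) :
    expand r (a :: t) cs = if a = r then (r :: dips r cs.headI) ++ expand r t cs.tail
      else a :: expand r t cs := rfl

lemma mem_dips {r x : ℤ} {c : ℕ} (h : x ∈ dips r c) : x = r - 1 ∨ x = r := by
  induction c with
  | zero => simp at h
  | succ c ih =>
    rw [dips_succ, List.mem_cons, List.mem_cons] at h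
    rcases h with h | h | h
    · exact Or.inl h
    · exact Or.inr h
    · exact ih h

lemma dips_getLast? (r : ℤ) (c : ℕ) : (r :: dips r c).getLast? = some r := by
  induction c with
  | zero => rfl
  | succ c ih => rw [dips_succ, List.getLast?_cons_cons, List.getLast?_cons_cons]; exact ih

lemma dips_chain' (r : ℤ) (c : ℕ) : (r :: dips r c).Chain' step := by
  induction c with
  | zero => simp [List.Chain']
  | succ c ih =>
    rw [dips_succ]
    exact List.isChain_cons_cons.mpr ⟨by simp [step], List.isChain_cons_cons.mpr ⟨by simp [step], ih⟩⟩

lemma ups_dips (k r : ℤ) (c : ℕ) : ups k (r :: dips r c) = if k = r then c else 0 := by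
  induction c with
  | zero => simp
  | succ c ih =>
    rw [dips_succ, ups_cons_cons, ups_cons_cons, ih]
    split_ifs <;> omega

@[simp] lemma expand_eq_nil_iff {r : ℤ} {t : List ℤ} {cs : List ℕ} :
    expand r t cs = [] ↔ t = [] := by
  cases t with
  | nil => simp
  | cons a t => rw [expand_cons]; split_ifs <;> simp

lemma expand_head? (r : ℤ) (t : List ℤ) (cs : List ℕ) :
    (expand r t cs).head? = t.head? := by
  cases t with
  | nil => rfl
  | cons a t =>
    rw [expand_cons]
    split_ifs with h
    · rw [h]; rfl
    · rfl

lemma expand_getLast? (r : ℤ) : ∀ (t : List ℤ) (cs : List ℕ),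
    (expand r t cs).getLast? = t.getLast?
  | [], _ => rfl
  | a :: t, cs => by
    rw [expand_cons]
    rcases eq_or_ne t [] with rfl | ht
    · split_ifs with h
      · simp only [expand_nil, List.append_nil]
        rw [dips_getLast? r cs.headI, List.getLast?_singleton, h]
      · rfl
    · have h1 : expand r t cs.tail ≠ [] := by simpa using ht
      have h2 : expand r t cs ≠ [] := by simpa using ht
      split_ifs with h
      · rw [List.getLast?_append_of_ne_nil _ h1, expand_getLast? r t cs.tail,
          getLast?_cons_ne_nil ht]
      · rw [getLast?_cons_ne_nil h2, expand_getLast? r t cs, getLast?_cons_ne_nil ht]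

lemma mem_expand {r x : ℤ} : ∀ {t : List ℤ} {cs : List ℕ}, x ∈ expand r t cs →
    x = r - 1 ∨ x ∈ t
  | [], cs, h => by simp at h
  | a :: t, cs, h => by
    rw [expand_cons] at h
    split_ifs at h with ha
    · rcases List.mem_append.mp h with h | h
      · rcases List.mem_cons.mp h with h | h
        · exact Or.inr (by simp [h, ha])
        · rcases mem_dips h with h | h
          · exact Or.inl h
          · exact Or.inr (by simp [h, ha])
      · rcases mem_expand h with h | h
        · exact Or.inl h
        · exact Or.inr (List.mem_cons_of_mem _ h)
    · rcases List.mem_cons.mp h with h | h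
      · exact Or.inr (by simp [h])
      · rcases mem_expand h with h | h
        · exact Or.inl h
        · exact Or.inr (List.mem_cons_of_mem _ h)

lemma mem_of_mem_expand {r x : ℤ} : ∀ {t : List ℤ} {cs : List ℕ}, x ∈ t → x ∈ expand r t cs
  | [], cs, h => by simp at h
  | a :: t, cs, h => by
    rw [expand_cons]
    rcases List.mem_cons.mp h with rfl | h
    · split_ifs with ha
      · exact List.mem_append.mpr (Or.inl (by simp [ha]))
      · simp
    · split_ifs with ha
      · exact List.mem_append.mpr (Or.inr (mem_of_mem_expand h))
      · exact List.mem_cons_of_mem _ (mem_of_mem_expand h)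

lemma expand_chain' (r : ℤ) : ∀ (t : List ℤ) (cs : List ℕ), t.Chain' step →
    (expand r t cs).Chain' step
  | [], _, _ => List.IsChain.nil
  | a :: t, cs, hc => by
    have ih := expand_chain' r t cs.tail (hc.tail)
    have ih' := expand_chain' r t cs (hc.tail)
    rw [expand_cons]
    split_ifs with ha
    · refine List.isChain_append.mpr ⟨dips_chain' r _, ih, ?_⟩
      intro x hx y hy
      rw [dips_getLast? r _] at hx
      simp only [Option.mem_def, Option.some.injEq] at hx
      rw [expand_head? r t cs.tail] at hy
      have := (List.isChain_cons.mp hc).1 y hy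
      rw [← hx, ← ha]
      exact this
    · refine List.isChain_cons.mpr ⟨?_, ih'⟩
      intro y hy
      rw [expand_head? r t cs] at hy
      exact (List.isChain_cons.mp hc).1 y hy

end UpX

namespace UpX

lemma ups_expand (k r : ℤ) : ∀ (t : List ℤ) (cs : List ℕ), cs.length = t.count r →
    ups k (expand r t cs) = ups k t + (if k = r then cs.sum else 0)
  | [], cs, h => by
    simp only [List.count_nil, List.length_eq_zero_iff] at h
    subst h; simp
  | a :: t, cs, h => by
    by_cases ha : a = r
    · subst ha
      have hne : cs ≠ [] := by
        intro hcs; subst hcs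
        rw [List.count_cons] at h
        simp at h
      obtain ⟨c, cs', rfl⟩ := List.exists_cons_of_ne_nil hne
      have hlen : cs'.length = t.count a := by
        rw [List.count_cons] at h
        simp only [List.length_cons, beq_self_eq_true, if_true] at h
        omega
      have ih := ups_expand k a t cs' hlen
      rw [expand_cons, if_pos rfl]
      simp only [List.headI_cons, List.tail_cons]
      rw [ups_append, ups_dips, ih, dips_getLast?, expand_head?,
        ups_cons k a t, List.sum_cons]
      simp only [Option.some.injEq]
      split_ifs <;> omega
    · have hlen : cs.length = t.count r := by
        rw [List.count_cons] at h
        simp only [beq_iff_eq] at h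
        rw [if_neg (fun hx => ha (by omega))] at h
        omega
      have ih := ups_expand k r t cs hlen
      rw [expand_cons, if_neg ha, ups_cons, expand_head?, ih, ups_cons k a t]
      split_ifs <;> omega

lemma head?_ne_of_forall {r : ℤ} {t : List ℤ} (h : ∀ x ∈ t, x ≠ r - 1) :
    t.head? ≠ some (r - 1) := by
  cases t with
  | nil => simp
  | cons a t =>
    simp only [List.head?_cons, ne_eq, Option.some.injEq]
    exact h a (by simp)

lemma dips_append_inj {r : ℤ} : ∀ (c₁ c₂ : ℕ) {x₁ x₂ : List ℤ},
    dips r c₁ ++ x₁ = dips r c₂ ++ x₂ →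
    x₁.head? ≠ some (r - 1) → x₂.head? ≠ some (r - 1) → c₁ = c₂ ∧ x₁ = x₂
  | 0, 0, x₁, x₂, h, _, _ => ⟨rfl, by simpa using h⟩
  | 0, c + 1, x₁, x₂, h, h₁, _ => by
    rw [dips_zero, dips_succ, List.nil_append, List.cons_append] at h
    exact absurd (by rw [h]; rfl) h₁
  | c + 1, 0, x₁, x₂, h, _, h₂ => by
    rw [dips_zero, dips_succ, List.nil_append, List.cons_append] at h
    exact absurd (by rw [← h]; rfl) h₂
  | c₁ + 1, c₂ + 1, x₁, x₂, h, h₁, h₂ => by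
    rw [dips_succ, dips_succ, List.cons_append, List.cons_append,
      List.cons_append, List.cons_append] at h
    simp only [List.cons.injEq, true_and] at h
    obtain ⟨hc, hx⟩ := dips_append_inj c₁ c₂ h h₁ h₂
    exact ⟨by omega, hx⟩

lemma expand_inj {r : ℤ} : ∀ (t₁ : List ℤ) (cs₁ : List ℕ) (t₂ : List ℤ) (cs₂ : List ℕ),
    (∀ x ∈ t₁, x ≠ r - 1) → (∀ x ∈ t₂, x ≠ r - 1) →
    cs₁.length = t₁.count r → cs₂.length = t₂.count r →
    expand r t₁ cs₁ = expand r t₂ cs₂ → t₁ = t₂ ∧ cs₁ = cs₂ := by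
  intro t₁
  induction t₁ with
  | nil =>
    intro cs₁ t₂ cs₂ _ _ hl₁ hl₂ heq
    simp only [expand_nil] at heq
    have ht₂ : t₂ = [] := by
      have := expand_eq_nil_iff.mp heq.symm
      exact this
    subst ht₂
    simp only [List.count_nil, List.length_eq_zero_iff] at hl₁ hl₂
    exact ⟨rfl, by rw [hl₁, hl₂]⟩
  | cons a t ih =>
    intro cs₁ t₂ cs₂ hne₁ hne₂ hl₁ hl₂ heq
    cases t₂ with
    | nil =>
      rw [expand_nil, expand_eq_nil_iff] at heq
      exact absurd heq (by simp)
    | cons b t₂' =>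
      have hab : a = b := by
        have := congrArg List.head? heq
        rw [expand_head?, expand_head?] at this
        simpa using this
      subst hab
      by_cases ha : a = r
      · subst ha
        have hc₁ : cs₁ ≠ [] := by
          intro hcs; subst hcs; rw [List.count_cons] at hl₁; simp at hl₁
        have hc₂ : cs₂ ≠ [] := by
          intro hcs; subst hcs; rw [List.count_cons] at hl₂; simp at hl₂
        obtain ⟨c₁, cs₁', rfl⟩ := List.exists_cons_of_ne_nil hc₁
        obtain ⟨c₂, cs₂', rfl⟩ := List.exists_cons_of_ne_nil hc₂
        rw [expand_cons, expand_cons, if_pos rfl, if_pos rfl] at heq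
        simp only [List.headI_cons, List.tail_cons, List.cons_append,
          List.cons.injEq, true_and] at heq
        have hh₁ : (expand a t cs₁').head? ≠ some (a - 1) := by
          rw [expand_head?]
          exact head?_ne_of_forall (fun x hx => hne₁ x (List.mem_cons_of_mem _ hx))
        have hh₂ : (expand a t₂' cs₂').head? ≠ some (a - 1) := by
          rw [expand_head?]
          exact head?_ne_of_forall (fun x hx => hne₂ x (List.mem_cons_of_mem _ hx))
        obtain ⟨hcc, hee⟩ := dips_append_inj c₁ c₂ heq hh₁ hh₂
        subst hcc
        have hl₁' : cs₁'.length = t.count a := by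
          rw [List.count_cons] at hl₁; simp only [List.length_cons] at hl₁
          simp only [beq_self_eq_true, if_true] at hl₁; omega
        have hl₂' : cs₂'.length = t₂'.count a := by
          rw [List.count_cons] at hl₂; simp only [List.length_cons] at hl₂
          simp only [beq_self_eq_true, if_true] at hl₂; omega
        obtain ⟨ht, hcs⟩ := ih cs₁' t₂' cs₂'
          (fun x hx => hne₁ x (List.mem_cons_of_mem _ hx))
          (fun x hx => hne₂ x (List.mem_cons_of_mem _ hx)) hl₁' hl₂' hee
        exact ⟨by rw [ht], by rw [hcs]⟩
      · rw [expand_cons, expand_cons, if_neg ha, if_neg ha] at heq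
        simp only [List.cons.injEq, true_and] at heq
        have hl₁' : cs₁.length = t.count r := by
          rw [List.count_cons] at hl₁
          simp only [beq_iff_eq] at hl₁
          rw [if_neg (fun hx => ha (by omega))] at hl₁
          omega
        have hl₂' : cs₂.length = t₂'.count r := by
          rw [List.count_cons] at hl₂
          simp only [beq_iff_eq] at hl₂
          rw [if_neg (fun hx => ha (by omega))] at hl₂
          omega
        obtain ⟨ht, hcs⟩ := ih cs₁ t₂' cs₂
          (fun x hx => hne₁ x (List.mem_cons_of_mem _ hx))
          (fun x hx => hne₂ x (List.mem_cons_of_mem _ hx)) hl₁' hl₂' heq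
        exact ⟨by rw [ht], hcs⟩

end UpX

namespace UpX

lemma strip_dips (r : ℤ) : ∀ (N : ℕ) (l₂ : List ℤ), l₂.length ≤ N →
    (r :: l₂).Chain' step → (∀ x ∈ l₂, r - 1 ≤ x) → (r :: l₂).getLast? ≠ some (r - 1) →
    ∃ c l₃, l₂ = dips r c ++ l₃ ∧ l₃.head? ≠ some (r - 1) ∧ (∀ x ∈ l₃, x ∈ l₂) ∧
      l₃.Chain' step ∧ (l₃ ≠ [] → l₃.getLast? = (r :: l₂).getLast?) ∧
      (∀ y ∈ l₃.head?, step r y) := by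
  intro N
  induction N with
  | zero =>
    intro l₂ hlen _ _ _
    have : l₂ = [] := List.length_eq_zero_iff.mp (Nat.le_zero.mp hlen)
    subst this
    exact ⟨0, [], by simp, by simp, by simp, List.IsChain.nil, by simp, by simp⟩
  | succ N ihN =>
    intro l₂ hlen hc hb hlast
    by_cases hhead : l₂.head? = some (r - 1)
    · -- l₂ starts with a dip
      cases l₂ with
      | nil => simp at hhead
      | cons e l₄ =>
        have he : e = r - 1 := by simpa using hhead
        subst he
        cases l₄ with
        | nil => simp [List.getLast?_cons_cons] at hlast
        | cons x l₅ =>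
          have hx : x = r := by
            have hstep : step (r - 1) x := (List.isChain_cons_cons.mp (List.isChain_cons_cons.mp hc).2).1
            have hxb : r - 1 ≤ x := hb x (by simp)
            rcases step_cases hstep with h | h <;> omega
          have hx' : r = x := hx.symm
          subst hx'
          have hc₅ : (r :: l₅).Chain' step := (List.isChain_cons_cons.mp (List.isChain_cons_cons.mp hc).2).2
          have hlast₅ : (r :: l₅).getLast? ≠ some (r - 1) := by
            rwa [List.getLast?_cons_cons, List.getLast?_cons_cons] at hlast
          obtain ⟨c, l₃, heq, hh, hm, hch, hl, hs⟩ := ihN l₅ (by simp at hlen ⊢; omega) hc₅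
            (fun x hx => hb x (by simp [hx])) hlast₅
          refine ⟨c + 1, l₃, ?_, hh, ?_, hch, ?_, hs⟩
          · rw [dips_succ, List.cons_append, List.cons_append, ← heq]
          · intro x hx
            have := hm x hx
            simp [this]
          · intro hne
            rw [hl hne, List.getLast?_cons_cons, List.getLast?_cons_cons]
    · -- no dip at the start
      refine ⟨0, l₂, by simp, hhead, fun x hx => hx, hc.tail, ?_, ?_⟩
      · intro hne
        exact (getLast?_cons_ne_nil hne).symm
      · intro y hy
        exact (List.isChain_cons.mp hc).1 y hy

lemma expand_surj (r : ℤ) : ∀ (N : ℕ) (l : List ℤ), l.length ≤ N → l.Chain' step →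
    (∀ x ∈ l, r - 1 ≤ x) → l.head? ≠ some (r - 1) → l.getLast? ≠ some (r - 1) →
    ∃ t cs, l = expand r t cs ∧ (∀ x ∈ t, x ≠ r - 1) ∧ cs.length = t.count r ∧
      (∀ x ∈ t, x ∈ l) ∧ t.Chain' step := by
  intro N
  induction N with
  | zero =>
    intro l hlen _ _ _ _
    have : l = [] := List.length_eq_zero_iff.mp (Nat.le_zero.mp hlen)
    subst this
    exact ⟨[], [], by simp, by simp, by simp, by simp, List.IsChain.nil⟩
  | succ N ihN =>
    intro l hlen hc hb hhead hlast
    cases l with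
    | nil => exact ⟨[], [], by simp, by simp, by simp, by simp, List.IsChain.nil⟩
    | cons a l₂ =>
      have ha' : a ≠ r - 1 := by simpa using hhead
      by_cases ha : a = r
      · -- strip the dips following the leading `r`
        rw [ha] at hc hlast
        obtain ⟨c, l₃, heq, hh₃, hm₃, hch₃, hl₃, hs₃⟩ := strip_dips r N l₂
          (by simp at hlen ⊢; omega) hc (fun x hx => hb x (by simp [hx])) hlast
        have hl₃len : l₃.length ≤ N := by
          have := congrArg List.length heq
          simp at this hlen ⊢
          omega
        have hlast₃ : l₃.getLast? ≠ some (r - 1) := by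
          cases eq_or_ne l₃ [] with
          | inl h => subst h; simp
          | inr h => rw [hl₃ h]; exact hlast
        obtain ⟨t₃, cs₃, he₃, hne₃, hcs₃, hmm₃, hcc₃⟩ := ihN l₃ hl₃len hch₃
          (fun x hx => hb x (by simp [List.mem_cons_of_mem _ (hm₃ x hx)])) hh₃ hlast₃
        refine ⟨r :: t₃, c :: cs₃, ?_, ?_, ?_, ?_, ?_⟩
        · rw [expand_cons, if_pos rfl]
          simp only [List.headI_cons, List.tail_cons, ← he₃]
          rw [List.cons_append, ← heq, ha]
        · intro x hx
          rcases List.mem_cons.mp hx with rfl | hx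
          · omega
          · exact hne₃ x hx
        · rw [List.count_cons]
          simp only [List.length_cons, beq_self_eq_true, if_true]
          omega
        · intro x hx
          rcases List.mem_cons.mp hx with rfl | hx
          · simp [ha]
          · exact List.mem_cons_of_mem _ (hm₃ x (by rw [he₃]; exact mem_of_mem_expand hx))
        · refine List.isChain_cons.mpr ⟨?_, hcc₃⟩
          intro y hy
          apply hs₃
          rw [he₃, expand_head? r t₃ cs₃]
          exact hy
      · -- generic first entry
        have hhead₂ : l₂.head? ≠ some (r - 1) := by
          cases l₂ with
          | nil => simp
          | cons y l₂' =>
            simp only [List.head?_cons, ne_eq, Option.some.injEq]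
            intro hy
            have hstep : step a y := (List.isChain_cons_cons.mp hc).1
            have hab : r - 1 ≤ a := hb a (by simp)
            rcases step_cases hstep with h | h <;> omega
        have hlast₂ : l₂.getLast? ≠ some (r - 1) := by
          cases eq_or_ne l₂ [] with
          | inl h => subst h; simp
          | inr h => rwa [getLast?_cons_ne_nil h] at hlast
        obtain ⟨t, cs, he, hne, hcs, hmm, hcc⟩ := ihN l₂ (by simp at hlen ⊢; omega) hc.tail
          (fun x hx => hb x (by simp [hx])) hhead₂ hlast₂
        refine ⟨a :: t, cs, ?_, ?_, ?_, ?_, ?_⟩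
        · rw [expand_cons, if_neg ha, ← he]
        · intro x hx
          rcases List.mem_cons.mp hx with rfl | hx
          · exact ha'
          · exact hne x hx
        · rw [List.count_cons]
          simp only [beq_iff_eq]
          rw [if_neg (fun hx => ha (by omega))]
          omega
        · intro x hx
          rcases List.mem_cons.mp hx with rfl | hx
          · simp
          · exact List.mem_cons_of_mem _ (hmm x hx)
        · refine List.isChain_cons.mpr ⟨?_, hcc⟩
          intro y hy
          have : l₂.head? = some y := by rw [he, expand_head? r t cs]; exact hy
          exact (List.isChain_cons.mp hc).1 y this

end UpX

namespace UpX

lemma count_toMul {p : ℕ} (s : Multiset (Fin p)) :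
    ∑ i : Fin p, s.count i = Multiset.card s := by
  rw [← Multiset.toFinset_sum_count_eq s]
  refine (Finset.sum_subset (Finset.subset_univ _) ?_).symm
  intro x _ hx
  exact Multiset.count_eq_zero.mpr (by simpa using hx)

/-- stars and bars: tuples summing to `q` are counted by multichoose -/
lemma card_tuple_sum (p q : ℕ) :
    Nat.card {f : Fin p → ℕ // ∑ i, f i = q} = (p + q - 1).choose q := by
  have hbij : Function.Bijective
      (fun (s : Sym (Fin p) q) => (⟨fun i => Multiset.count i s.val, by
        rw [count_toMul s.val, s.property]⟩ : {f : Fin p → ℕ // ∑ i, f i = q})) := by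
    constructor
    · rintro ⟨s₁, h₁⟩ ⟨s₂, h₂⟩ h
      simp only [Subtype.mk.injEq] at h ⊢
      ext a
      exact congrFun h a
    · rintro ⟨f, hf⟩
      refine ⟨⟨∑ i : Fin p, f i • ({i} : Multiset (Fin p)), ?_⟩, ?_⟩
      · have hcard := map_sum (⟨⟨Multiset.card, Multiset.card_zero⟩, Multiset.card_add⟩ :
          Multiset (Fin p) →+ ℕ) (fun i => f i • ({i} : Multiset (Fin p))) Finset.univ
        simp only [AddMonoidHom.coe_mk, ZeroHom.coe_mk] at hcard
        rw [hcard]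
        simp [hf]
      · simp only [Subtype.mk.injEq]
        funext j
        rw [Multiset.count_sum']
        simp only [Multiset.count_nsmul, Multiset.count_singleton]
        rw [Finset.sum_eq_single j]
        · simp
        · intro b _ hb
          simp [Ne.symm hb]
        · simp
  rw [← Nat.card_congr (Equiv.ofBijective _ hbij), Nat.card_eq_fintype_card,
    Sym.card_sym_eq_choose, Fintype.card_fin]

lemma card_compositions (p q : ℕ) :
    Nat.card {cs : List ℕ // cs.length = p ∧ cs.sum = q} = (p + q - 1).choose q := by
  have hbij : Function.Bijective
      (fun (f : {f : Fin p → ℕ // ∑ i, f i = q}) =>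
        (⟨List.ofFn f.val, by simp, by rw [List.sum_ofFn, f.property]⟩ :
          {cs : List ℕ // cs.length = p ∧ cs.sum = q})) := by
    constructor
    · rintro ⟨f₁, h₁⟩ ⟨f₂, h₂⟩ h
      simp only [Subtype.mk.injEq] at h ⊢
      exact List.ofFn_injective h
    · rintro ⟨cs, hlen, hsum⟩
      refine ⟨⟨fun i => cs.get (Fin.cast hlen.symm i), ?_⟩, ?_⟩
      · have : List.ofFn (fun i : Fin p => cs.get (Fin.cast hlen.symm i)) = cs := by
          apply List.ext_getElem
          · simp [hlen]
          · intro i h1 h2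
            simp [List.getElem_ofFn]
        rw [← hsum]
        conv_rhs => rw [← this, List.sum_ofFn]
      · simp only [Subtype.mk.injEq]
        apply List.ext_getElem
        · simp [hlen]
        · intro i h1 h2
          simp [List.getElem_ofFn]
  rw [← Nat.card_congr (Equiv.ofBijective _ hbij), card_tuple_sum]

end UpX

namespace UpX

/-- the unique path when `r = n`: alternate `n-1, n, n-1, n, ...` -/
def alt (n : ℤ) : ℕ → List ℤ
  | 0 => []
  | j + 1 => (n - 1) :: n :: alt n j

lemma alt_getLast? (n : ℤ) (j : ℕ) : (alt n (j + 1)).getLast? = some n := by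
  induction j with
  | zero => rfl
  | succ j ih =>
    show ((n-1) :: n :: (n-1) :: n :: alt n j).getLast? = some n
    rw [List.getLast?_cons_cons, List.getLast?_cons_cons]
    exact ih

lemma alt_chain' (n : ℤ) (j : ℕ) : (alt n j).Chain' step := by
  induction j with
  | zero => exact List.IsChain.nil
  | succ j ih =>
    show ((n-1) :: n :: alt n j).Chain' step
    refine List.isChain_cons_cons.mpr ⟨by simp [step], List.isChain_cons.mpr ⟨?_, ih⟩⟩
    intro y hy
    cases j with
    | zero => simp [alt] at hy
    | succ j' =>
      have : y = n - 1 := by simp [alt] at hy; omega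
      simp [this, step]

lemma alt_bounds (n : ℤ) (j : ℕ) : ∀ x ∈ alt n j, n - 1 ≤ x ∧ x ≤ n := by
  induction j with
  | zero => simp [alt]
  | succ j ih =>
    intro x hx
    rcases List.mem_cons.mp hx with rfl | hx
    · omega
    · rcases List.mem_cons.mp hx with rfl | hx
      · omega
      · exact ih x hx

lemma alt_ups (n : ℤ) (j : ℕ) : ups n (alt n j) = j := by
  induction j with
  | zero => rfl
  | succ j ih =>
    show ups n ((n-1) :: n :: alt n j) = j + 1
    rw [ups_cons_cons, if_pos ⟨rfl, rfl⟩, ups_cons, ih]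
    rw [if_neg (by intro h; have := h.1; omega)]
    omega

lemma good_unique (n : ℤ) : ∀ l : List ℤ, l.Chain' step → (∀ x ∈ l, n - 1 ≤ x ∧ x ≤ n) →
    l.head? = some (n - 1) → l.getLast? = some n → l = alt n (ups n l)
  | [], _, _, hh, _ => by simp at hh
  | [a], _, hb, hh, hl => by
    simp only [List.head?_cons, Option.some.injEq] at hh
    simp only [List.getLast?_singleton, Option.some.injEq] at hl
    omega
  | a :: b :: t, hc, hb, hh, hl => by
    have ha : a = n - 1 := by simpa using hh
    have hstep : step a b := (List.isChain_cons_cons.mp hc).1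
    have hbb := hb b (by simp)
    have hbn : b = n := by
      rcases step_cases hstep with h | h <;> omega
    have hbn' : n = b := hbn.symm
    cases t with
    | nil =>
      subst ha; subst hbn'
      rw [ups_cons_cons, if_pos ⟨rfl, rfl⟩]
      rfl
    | cons c t' =>
      have hstep₂ : step b c := (List.isChain_cons_cons.mp (List.isChain_cons_cons.mp hc).2).1
      have hcc := hb c (by simp)
      have hcn : c = n - 1 := by
        rcases step_cases hstep₂ with h | h <;> omega
      have ihl : c :: t' = alt n (ups n (c :: t')) :=
        good_unique n (c :: t') (List.isChain_cons_cons.mp (List.isChain_cons_cons.mp hc).2).2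
          (fun x hx => hb x (by simp [hx]))
          (by simp [hcn])
          (by rw [← hl, List.getLast?_cons_cons, List.getLast?_cons_cons])
      subst ha; subst hbn'
      rw [ups_cons_cons, if_pos ⟨rfl, rfl⟩, ups_cons]
      rw [if_neg (by intro h; have := h.1; omega)]
      rw [show 1 + (0 + ups n (c :: t')) = ups n (c :: t') + 1 from by omega]
      show (n-1) :: n :: (c :: t') = alt n (ups n (c :: t') + 1)
      conv_lhs => rw [ihl]
      rfl

lemma good_iff_alt {n : ℤ} {m : ℤ → ℕ} (hm : 1 ≤ m n) (l : List ℤ) :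
    Good n n m l ↔ l = alt n (m n) := by
  constructor
  · rintro ⟨hh, hl, hc, hb, hu⟩
    have := good_unique n l hc (by simpa using hb) hh hl
    rwa [hu n (by simp)] at this
  · rintro rfl
    obtain ⟨j, hj⟩ : ∃ j, m n = j + 1 := ⟨m n - 1, by omega⟩
    rw [hj]
    refine ⟨rfl, alt_getLast? n j, alt_chain' n _, by simpa using alt_bounds n _, ?_⟩
    intro k hk
    have : k = n := by simp only [Finset.mem_Icc] at hk; omega
    subst this
    rw [alt_ups, hj]

/-- the one-level expansion bijection -/
lemma card_level (r n : ℤ) (m : ℤ → ℕ) (hrn : r < n) :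
    Nat.card {l : List ℤ // Good r n m l} =
      Nat.card {t : List ℤ // Good (r + 1) n m t} *
      Nat.card {cs : List ℕ // cs.length = m (r + 1) ∧ cs.sum = m r} := by
  rw [← Nat.card_prod]
  apply Nat.card_congr
  symm
  have key : ∀ (t : List ℤ), Good (r + 1) n m t → (∀ x ∈ t, r ≤ x ∧ x ≤ n) ∧
      t.count r = m (r + 1) := by
    intro t ht
    have hb : ∀ x ∈ t, r ≤ x ∧ x ≤ n := by
      intro x hx
      have := ht.2.2.2.1 x hx
      omega
    refine ⟨hb, ?_⟩
    rw [count_eq_ups r t ht.2.2.1 (fun x hx => (hb x hx).1)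
      (by rw [ht.2.1]; intro h; simp only [Option.some.injEq] at h; omega)]
    exact ht.2.2.2.2 (r + 1) (by simp only [Finset.mem_Icc]; omega)
  refine Equiv.ofBijective (fun p => ⟨expand r p.1.val p.2.val, ?_⟩) ⟨?_, ?_⟩
  · -- well-definedness
    obtain ⟨⟨t, ht⟩, ⟨cs, hcs⟩⟩ := p
    obtain ⟨hb, hcount⟩ := key t ht
    have hlen : cs.length = t.count r := by rw [hcount, hcs.1]
    refine ⟨?_, ?_, ?_, ?_, ?_⟩
    · rw [expand_head?, ht.1]
    · rw [expand_getLast?, ht.2.1]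
    · exact expand_chain' r t cs ht.2.2.1
    · intro x hx
      rcases mem_expand hx with rfl | hx
      · omega
      · have := hb x hx; omega
    · intro k hk
      simp only [Finset.mem_Icc] at hk
      rw [ups_expand k r t cs hlen]
      by_cases hkr : k = r
      · subst hkr
        rw [ups_eq_zero (fun x hx => by have := (hb x hx).1; omega), if_pos rfl,
          hcs.2, zero_add]
      · rw [if_neg hkr, ht.2.2.2.2 k (by simp only [Finset.mem_Icc]; omega), add_zero]
  · -- injectivity
    rintro ⟨⟨t₁, ht₁⟩, ⟨cs₁, hcs₁⟩⟩ ⟨⟨t₂, ht₂⟩, ⟨cs₂, hcs₂⟩⟩ h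
    simp only [Subtype.mk.injEq] at h
    obtain ⟨hb₁, hc₁⟩ := key t₁ ht₁
    obtain ⟨hb₂, hc₂⟩ := key t₂ ht₂
    obtain ⟨h₁, h₂⟩ := expand_inj t₁ cs₁ t₂ cs₂
      (fun x hx => by have := (hb₁ x hx).1; omega)
      (fun x hx => by have := (hb₂ x hx).1; omega)
      (by rw [hc₁, hcs₁.1]) (by rw [hc₂, hcs₂.1]) h
    simp only [Prod.mk.injEq, Subtype.mk.injEq]
    exact ⟨h₁, h₂⟩
  · -- surjectivity
    rintro ⟨l, hl⟩
    obtain ⟨t, cs, he, hne, hcs, hmem, hchain⟩ := expand_surj r l.length l le_rfl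
      hl.2.2.1 (fun x hx => (hl.2.2.2.1 x hx).1)
      (by rw [hl.1]; intro h; simp only [Option.some.injEq] at h; omega)
      (by rw [hl.2.1]; intro h; simp only [Option.some.injEq] at h; omega)
    have hbt : ∀ x ∈ t, r ≤ x ∧ x ≤ n := by
      intro x hx
      have h1 := hl.2.2.2.1 x (hmem x hx)
      have h2 := hne x hx
      omega
    have hupst : ∀ k, ups k l = ups k t + if k = r then cs.sum else 0 := by
      intro k
      rw [he, ups_expand k r t cs hcs]
    have hgt : Good (r + 1) n m t := by
      refine ⟨?_, ?_, hchain, ?_, ?_⟩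
      · rw [← hl.1, he, expand_head?]
      · rw [← hl.2.1, he, expand_getLast?]
      · intro x hx
        have := hbt x hx
        omega
      · intro k hk
        simp only [Finset.mem_Icc] at hk
        have := hupst k
        rw [if_neg (by omega)] at this
        rw [← hl.2.2.2.2 k (by simp only [Finset.mem_Icc]; omega)]
        omega
    have hcount : t.count r = m (r + 1) := (key t hgt).2
    have hsum : cs.sum = m r := by
      have := hupst r
      rw [if_pos rfl,
        show ups r t = 0 from ups_eq_zero (fun x hx => by have := (hbt x hx).1; omega),
        hl.2.2.2.2 r (by simp only [Finset.mem_Icc]; omega)] at this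
      omega
    exact ⟨⟨⟨t, hgt⟩, ⟨cs, by rw [hcs, hcount], hsum⟩⟩, Subtype.ext he.symm⟩

/-- list-level main theorem -/
lemma list_count (m : ℤ → ℕ) : ∀ (d : ℕ) (r n : ℤ), r ≤ n → n - r = d →
    (∀ k ∈ Finset.Icc r n, 1 ≤ m k) →
    Nat.card {l : List ℤ // Good r n m l} =
      ∏ k ∈ Finset.Icc r (n - 1), (m (k + 1) + m k - 1).choose (m k) := by
  intro d
  induction d with
  | zero =>
    intro r n hrn hd hm
    have : r = n := by omega
    subst this
    rw [Finset.Icc_eq_empty (by omega), Finset.prod_empty]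
    have hmn : 1 ≤ m r := hm r (by simp)
    have hu : ∀ l : List ℤ, Good r r m l ↔ l = alt r (m r) := good_iff_alt hmn
    have : Nonempty {l : List ℤ // Good r r m l} := ⟨⟨alt r (m r), (hu _).mpr rfl⟩⟩
    rw [Nat.card_eq_one_iff_unique]
    refine ⟨⟨?_⟩, this⟩
    rintro ⟨l₁, h₁⟩ ⟨l₂, h₂⟩
    exact Subtype.ext (((hu l₁).mp h₁).trans ((hu l₂).mp h₂).symm)
  | succ d ih =>
    intro r n hrn hd hm
    have hlt : r < n := by omega
    rw [card_level r n m hlt, ih (r + 1) n (by omega) (by omega)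
      (fun k hk => hm k (by simp only [Finset.mem_Icc] at hk ⊢; omega)),
      card_compositions]
    have hins : Finset.Icc r (n - 1) = insert r (Finset.Icc (r + 1) (n - 1)) := by
      ext k
      simp only [Finset.mem_Icc, Finset.mem_insert]
      omega
    rw [hins, Finset.prod_insert (by simp only [Finset.mem_Icc]; omega)]
    ring

end UpX

namespace UpX

/-- `ups` as a filtered count of adjacent positions -/
lemma ups_eq_filter_card (k v : ℤ) : ∀ l : List ℤ,
    ups k l = ((Finset.range (l.length - 1)).filter
      (fun i => l.getD i v = k - 1 ∧ l.getD (i + 1) v = k)).card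
  | [] => by simp
  | [a] => by simp
  | a :: b :: t => by
    have ih := ups_eq_filter_card k v (b :: t)
    rw [ups_cons_cons, ih, Finset.card_filter, Finset.card_filter]
    have hlen : (a :: b :: t).length - 1 = ((b :: t).length - 1) + 1 := by simp
    rw [hlen, Finset.sum_range_succ']
    simp only [List.getD_cons_succ, List.getD_cons_zero]
    omega

/-- shift a filtered count from `Ico 1 L` to `range (L-1)` -/
lemma filter_card_shift (L : ℕ) (P : ℕ → Prop) [DecidablePred P] :
    ((Finset.Ico 1 L).filter P).card =
      ((Finset.range (L - 1)).filter (fun i => P (i + 1))).card := by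
  apply Finset.card_bij' (fun j _ => j - 1) (fun i _ => i + 1) ?_ ?_ ?_ ?_
  all_goals intro x hx
  all_goals simp only [Finset.mem_filter, Finset.mem_Ico, Finset.mem_range] at hx ⊢
  · exact ⟨by omega, by rw [show x - 1 + 1 = x from by omega]; exact hx.2⟩
  · exact ⟨⟨by omega, by omega⟩, hx.2⟩
  · omega
  · omega

end UpX

namespace UpX

lemma getD_zero_of_head? {l : List ℤ} {a v : ℤ} (h : l.head? = some a) : l.getD 0 v = a := by
  cases l with
  | nil => simp at h
  | cons b t => simpa using h

lemma getD_last_of_getLast? {l : List ℤ} {a v : ℤ} (h : l.getLast? = some a) :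
    l.getD (l.length - 1) v = a := by
  have hne : l ≠ [] := by intro hl; subst hl; simp at h
  rw [List.getLast?_eq_getElem?] at h
  have hlt : l.length - 1 < l.length := by
    cases l with
    | nil => exact absurd rfl hne
    | cons b t => simp
  rw [List.getElem?_eq_getElem hlt] at h
  rw [List.getD_eq_getElem l v hlt]
  exact Option.some.inj h

lemma chain_getD {l : List ℤ} (h : l.Chain' step) {i : ℕ} (hi : i + 1 < l.length) (v : ℤ) :
    |l.getD (i + 1) v - l.getD i v| = 1 := by
  have hstep := List.isChain_iff_getElem.mp h i (by omega)
  rw [List.getD_eq_getElem l v (by omega : i < l.length), List.getD_eq_getElem l v hi]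
  simpa [step, List.get_eq_getElem] using hstep

lemma getD_mem {l : List ℤ} {i : ℕ} (hi : i < l.length) (v : ℤ) : l.getD i v ∈ l := by
  rw [List.getD_eq_getElem l v hi]
  exact List.getElem_mem hi

lemma ups_eq_card_filter_fun (k v : ℤ) (l : List ℤ) (s : ℕ → ℤ)
    (hs : ∀ j, 1 ≤ j → j ≤ l.length → s j = l.getD (j - 1) v) :
    ((Finset.Ico 1 l.length).filter (fun j => s j = k - 1 ∧ s (j + 1) = k)).card = ups k l := by
  rw [filter_card_shift, ups_eq_filter_card k v l]
  congr 1
  apply Finset.filter_congr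
  intro i hi
  simp only [Finset.mem_range] at hi
  rw [hs (i + 1) (by omega) (by omega), hs (i + 1 + 1) (by omega) (by omega)]
  rfl

end UpX


open UpX

/-- Counting upcrossing orderings: fix integer levels `r ≤ n - 1` (here `r = ρn`) and
prescribed upcrossing counts `m_k ≥ 1` for `k = r, …, n`. The number of nearest-neighbour
level sequences `s : {1,…,N} → {r−1,…,n}` (normalized to equal `n` outside `{1,…,N}`) with
`s(1) = n−1`, `s(N) = n`, `|s(j+1) − s(j)| = 1`, and exactly `m_k` upcrossings from level
`k−1` to level `k` for each `k ∈ {r,…,n}` (where necessarily `N = 2 Σ_k m_k`), equals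
`Π_{k=r}^{n−1} binom(m_{k+1} + m_k − 1, m_k)`. -/
theorem count_upcrossing_orderings (r n : ℤ) (hrn : r ≤ n - 1) (m : ℤ → ℕ)
    (hm : ∀ k ∈ Finset.Icc r n, 1 ≤ m k) :
    Set.ncard {s : ℕ → ℤ |
        s 1 = n - 1 ∧
        s (2 * ∑ k ∈ Finset.Icc r n, m k) = n ∧
        (∀ j : ℕ, 1 ≤ j → j < 2 * ∑ k ∈ Finset.Icc r n, m k → |s (j + 1) - s j| = 1) ∧
        (∀ j : ℕ, 1 ≤ j → j ≤ 2 * ∑ k ∈ Finset.Icc r n, m k → r - 1 ≤ s j ∧ s j ≤ n) ∧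
        (∀ j : ℕ, j = 0 ∨ 2 * ∑ k ∈ Finset.Icc r n, m k < j → s j = n) ∧
        (∀ k ∈ Finset.Icc r n,
          ((Finset.Ico 1 (2 * ∑ k' ∈ Finset.Icc r n, m k')).filter
            (fun j => s j = k - 1 ∧ s (j + 1) = k)).card = m k)} =
      ∏ k ∈ Finset.Icc r (n - 1), (m (k + 1) + m k - 1).choose (m k) := by
  classical
  have hrn' : r ≤ n := by omega
  set M := ∑ k ∈ Finset.Icc r n, m k with hMdef
  have hM1 : 1 ≤ M := by
    refine le_trans (hm n (by simp only [Finset.mem_Icc]; omega)) ?_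
    exact Finset.single_le_sum (f := m) (fun _ _ => Nat.zero_le _)
      (by simp only [Finset.mem_Icc]; omega)
  rw [← Nat.card_coe_set_eq,
    ← list_count m (n - r).toNat r n hrn' (by omega) hm]
  refine (Nat.card_congr (Equiv.ofBijective
    (fun lp => ⟨fun j => if 1 ≤ j ∧ j ≤ 2 * M then lp.val.getD (j - 1) n else n, ?mem⟩)
    ⟨?inj, ?surj⟩)).symm
  case mem =>
    obtain ⟨l, hl⟩ := lp
    have hlen : l.length = 2 * M := Good.length hrn' hl
    simp only [Set.mem_setOf_eq]
    refine ⟨?_, ?_, ?_, ?_, ?_, ?_⟩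
    · rw [if_pos (by omega)]
      simpa using getD_zero_of_head? (v := n) hl.1
    · rw [if_pos (by omega)]
      have := getD_last_of_getLast? (v := n) hl.2.1
      rwa [hlen] at this
    · intro j h1 h2
      rw [if_pos (by omega), if_pos (by omega)]
      have := chain_getD hl.2.2.1 (i := j - 1) (by omega) n
      rw [show j - 1 + 1 = j from by omega] at this
      rw [show j + 1 - 1 = j from by omega]
      exact this
    · intro j h1 h2
      rw [if_pos (by omega)]
      exact hl.2.2.2.1 _ (getD_mem (by omega) n)
    · intro j hj
      rw [if_neg (by omega)]
    · intro k hk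
      have hcard := ups_eq_card_filter_fun k n l
        (fun j => if 1 ≤ j ∧ j ≤ 2 * M then l.getD (j - 1) n else n)
        (fun j h1 h2 => by
          show (if 1 ≤ j ∧ j ≤ 2 * M then l.getD (j - 1) n else n) = l.getD (j - 1) n
          rw [if_pos (by omega)])
      rw [hlen] at hcard
      rw [hcard]
      exact hl.2.2.2.2 k hk
  case inj =>
    rintro ⟨l₁, h₁⟩ ⟨l₂, h₂⟩ h
    simp only [Subtype.mk.injEq] at h ⊢
    have hfun := h
    have hlen₁ : l₁.length = 2 * M := Good.length hrn' h₁
    have hlen₂ : l₂.length = 2 * M := Good.length hrn' h₂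
    apply List.ext_getElem (by omega)
    intro i hi₁ hi₂
    have := congrFun hfun (i + 1)
    simp only [if_pos (show 1 ≤ i + 1 ∧ i + 1 ≤ 2 * M by omega)] at this
    rw [List.getD_eq_getElem l₁ n (by omega : i + 1 - 1 < l₁.length),
      List.getD_eq_getElem l₂ n (by omega : i + 1 - 1 < l₂.length)] at this
    simpa using this
  case surj =>
    rintro ⟨s, hs⟩
    obtain ⟨hs1, hs2, hs3, hs4, hs5, hs6⟩ := hs
    set l : List ℤ := (List.range (2 * M)).map (fun i => s (i + 1)) with hldef
    have hlen : l.length = 2 * M := by simp [hldef]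
    have hget : ∀ i, i < 2 * M → ∀ (h : i < l.length), l[i] = s (i + 1) := by
      intro i hi h
      simp [hldef]
    have hgetD : ∀ j, 1 ≤ j → j ≤ 2 * M → s j = l.getD (j - 1) n := by
      intro j h1 h2
      rw [List.getD_eq_getElem l n (by omega : j - 1 < l.length),
        hget (j - 1) (by omega) (by omega), show j - 1 + 1 = j from by omega]
    have hgood : Good r n m l := by
      refine ⟨?_, ?_, ?_, ?_, ?_⟩
      · rw [List.head?_eq_getElem?, List.getElem?_eq_getElem (by omega : 0 < l.length),
          hget 0 (by omega) (by omega)]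
        rw [hs1]
      · rw [List.getLast?_eq_getElem?, List.getElem?_eq_getElem
          (by omega : l.length - 1 < l.length),
          hget (l.length - 1) (by omega) (by omega),
          show l.length - 1 + 1 = 2 * M from by omega, hs2]
      · refine List.isChain_iff_getElem.mpr ?_
        intro i hi
        rw [hget i (by omega) (by omega), hget (i + 1) (by omega) (by omega)]
        exact hs3 (i + 1) (by omega) (by omega)
      · intro x hx
        simp only [hldef, List.mem_map, List.mem_range] at hx
        obtain ⟨i, hi, rfl⟩ := hx
        exact hs4 (i + 1) (by omega) (by omega)
      · intro k hk
        have hcard := ups_eq_card_filter_fun k n l s (by rw [hlen]; exact hgetD)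
        rw [hlen] at hcard
        rw [← hcard]
        exact hs6 k hk
    refine ⟨⟨l, hgood⟩, ?_⟩
    apply Subtype.ext
    simp only
    funext j
    by_cases hj : 1 ≤ j ∧ j ≤ 2 * M
    · rw [if_pos hj, ← hgetD j hj.1 hj.2]
    · rw [if_neg hj]
      exact (hs5 j (by omega)).symm

end
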